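/- Let p, q ∈ (0,1], R > 0, and α > 0. For each integer N ≥ 1 define Π_N = α·[ Σ_{k=0}^{N−1} log((k+1)/N)·C(N−1,k)·(pq)^k·(1−pq)^{N−1−k} − Σ_{k=0}^{N−1} log((k+1)/N)·C(N−1,k)·p^k·(1−p)^{N−1−k} − log R ]. Then lim_{N→∞} Π_N = α·log(q/R). -/

import Mathlib

open Finset Filter Real

private lemma binom_sum_one (n : ℕ) (x : ℝ) :
    ∑ k ∈ range (n + 1), (n.choose k : ℝ) * x ^ k * (1 - x) ^ (n - k) = 1 := by
  calc ∑ k ∈ range (n + 1), (n.choose k : ℝ) * x ^ k * (1 - x) ^ (n - k)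
      = ∑ k ∈ range (n + 1), x ^ k * (1 - x) ^ (n - k) * (n.choose k : ℝ) :=
        Finset.sum_congr rfl fun k _ => by ring
    _ = (x + (1 - x)) ^ n := (add_pow x (1 - x) n).symm
    _ = 1 := by norm_num

private lemma binom_mean (n : ℕ) (x : ℝ) :
    ∑ k ∈ range (n + 1), (k : ℝ) * (n.choose k : ℝ) * x ^ k * (1 - x) ^ (n - k)
      = n * x := by
  cases n with
  | zero => simp
  | succ m =>
    rw [Finset.sum_range_succ']
    have step : ∀ j ∈ range (m + 1),
        ((j + 1 : ℕ) : ℝ) * ((m + 1).choose (j + 1) : ℝ) * x ^ (j + 1) *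
          (1 - x) ^ (m + 1 - (j + 1))
        = (((m : ℝ) + 1) * x) * ((m.choose j : ℝ) * x ^ j * (1 - x) ^ (m - j)) := by
      intro j _
      have h2 : ((m : ℝ) + 1) * (m.choose j : ℝ)
          = ((m + 1).choose (j + 1) : ℝ) * ((j : ℝ) + 1) := by
        exact_mod_cast Nat.add_one_mul_choose_eq m j
      have hsub : m + 1 - (j + 1) = m - j := by omega
      rw [hsub]
      push_cast
      linear_combination (-(x ^ (j + 1) * (1 - x) ^ (m - j))) * h2
    rw [Finset.sum_congr rfl step, ← Finset.mul_sum, binom_sum_one]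
    push_cast
    ring

private lemma binom_recip (n : ℕ) (x : ℝ) :
    ∑ k ∈ range (n + 1),
      (((n : ℝ) + 1) * x / ((k : ℝ) + 1)) * (n.choose k : ℝ) * x ^ k * (1 - x) ^ (n - k)
      = 1 - (1 - x) ^ (n + 1) := by
  have hterm : ∀ k : ℕ, (((n : ℝ) + 1) * x / ((k : ℝ) + 1)) * (n.choose k : ℝ) * x ^ k
      = ((n + 1).choose (k + 1) : ℝ) * x ^ (k + 1) := by
    intro k
    have h2 : ((n : ℝ) + 1) * (n.choose k : ℝ)
        = ((n + 1).choose (k + 1) : ℝ) * ((k : ℝ) + 1) := by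
      exact_mod_cast Nat.add_one_mul_choose_eq n k
    have hk : ((k : ℝ) + 1) ≠ 0 := by positivity
    field_simp
    linear_combination x ^ (k + 1) * h2
  have key : ∑ k ∈ range (n + 1),
      (((n : ℝ) + 1) * x / ((k : ℝ) + 1)) * (n.choose k : ℝ) * x ^ k * (1 - x) ^ (n - k)
      = ∑ k ∈ range (n + 1),
        x ^ (k + 1) * (1 - x) ^ (n + 1 - (k + 1)) * ((n + 1).choose (k + 1) : ℝ) := by
    refine Finset.sum_congr rfl fun k hk => ?_
    have hsub : n + 1 - (k + 1) = n - k := by omega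
    rw [hsub]
    linear_combination ((1 - x) ^ (n - k)) * hterm k
  rw [key]
  have h := add_pow x (1 - x) (n + 1)
  have hx : x + (1 - x) = 1 := by ring
  rw [hx, one_pow, Finset.sum_range_succ'] at h
  simp only [pow_zero, Nat.choose_zero_right, Nat.cast_one, one_mul, mul_one,
    Nat.sub_zero] at h
  linarith [h]

private noncomputable def binS (n : ℕ) (x : ℝ) : ℝ :=
  ∑ k ∈ range (n + 1),
    Real.log (((k : ℝ) + 1) / ((n : ℝ) + 1)) * (n.choose k : ℝ) * x ^ k * (1 - x) ^ (n - k)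

private lemma binS_bounds (n : ℕ) (x : ℝ) (hx0 : 0 < x) (hx1 : x ≤ 1) :
    Real.log x + (1 - x) ^ (n + 1) ≤ binS n x ∧
      binS n x ≤ Real.log x + (1 - x) / (((n : ℝ) + 1) * x) := by
  have hxne : x ≠ 0 := hx0.ne'
  have hn1 : ((n : ℝ) + 1) ≠ 0 := by positivity
  have hy : (0 : ℝ) ≤ 1 - x := by linarith
  have hw : ∀ k, (0 : ℝ) ≤ (n.choose k : ℝ) * x ^ k * (1 - x) ^ (n - k) := by
    intro k; positivity
  have hlog : ∀ k : ℕ,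
      Real.log x + 1 - ((n : ℝ) + 1) * x / ((k : ℝ) + 1)
        ≤ Real.log (((k : ℝ) + 1) / ((n : ℝ) + 1)) ∧
      Real.log (((k : ℝ) + 1) / ((n : ℝ) + 1))
        ≤ Real.log x + ((k : ℝ) + 1) / (((n : ℝ) + 1) * x) - 1 := by
    intro k
    set t : ℝ := ((k : ℝ) + 1) / (((n : ℝ) + 1) * x) with ht
    have hkpos : (0 : ℝ) < (k : ℝ) + 1 := by positivity
    have hnpos : (0 : ℝ) < (n : ℝ) + 1 := by positivity
    have htpos : 0 < t := by positivity
    have hdecomp : ((k : ℝ) + 1) / ((n : ℝ) + 1) = x * t := by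
      rw [ht]; field_simp
    have hsplit : Real.log (((k : ℝ) + 1) / ((n : ℝ) + 1)) = Real.log x + Real.log t := by
      rw [hdecomp, Real.log_mul hxne htpos.ne']
    have hup : Real.log t ≤ t - 1 := Real.log_le_sub_one_of_pos htpos
    have hlo : 1 - t⁻¹ ≤ Real.log t := by
      have := Real.log_le_sub_one_of_pos (inv_pos.mpr htpos)
      rw [Real.log_inv] at this
      linarith
    have htinv : t⁻¹ = ((n : ℝ) + 1) * x / ((k : ℝ) + 1) := by
      rw [ht, inv_div]
    constructor
    · rw [hsplit]; rw [htinv] at hlo; linarith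
    · rw [hsplit, ht]; linarith
  constructor
  · -- lower bound
    have hstep : ∀ k ∈ range (n + 1),
        (Real.log x + 1) * ((n.choose k : ℝ) * x ^ k * (1 - x) ^ (n - k))
          - (((n : ℝ) + 1) * x / ((k : ℝ) + 1)) * (n.choose k : ℝ) * x ^ k * (1 - x) ^ (n - k)
        ≤ Real.log (((k : ℝ) + 1) / ((n : ℝ) + 1)) * (n.choose k : ℝ) * x ^ k *
            (1 - x) ^ (n - k) := by
      intro k _
      have h3 := mul_le_mul_of_nonneg_right (hlog k).1 (hw k)
      calc (Real.log x + 1) * ((n.choose k : ℝ) * x ^ k * (1 - x) ^ (n - k))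
            - (((n : ℝ) + 1) * x / ((k : ℝ) + 1)) * (n.choose k : ℝ) * x ^ k * (1 - x) ^ (n - k)
          = (Real.log x + 1 - ((n : ℝ) + 1) * x / ((k : ℝ) + 1)) *
              ((n.choose k : ℝ) * x ^ k * (1 - x) ^ (n - k)) := by ring
        _ ≤ Real.log (((k : ℝ) + 1) / ((n : ℝ) + 1)) *
              ((n.choose k : ℝ) * x ^ k * (1 - x) ^ (n - k)) := h3
        _ = Real.log (((k : ℝ) + 1) / ((n : ℝ) + 1)) * (n.choose k : ℝ) * x ^ k *
              (1 - x) ^ (n - k) := by ring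
    have hsum := Finset.sum_le_sum hstep
    rw [Finset.sum_sub_distrib, ← Finset.mul_sum, binom_sum_one, binom_recip] at hsum
    have hb : binS n x = ∑ k ∈ range (n + 1),
        Real.log (((k : ℝ) + 1) / ((n : ℝ) + 1)) * (n.choose k : ℝ) * x ^ k *
          (1 - x) ^ (n - k) := rfl
    rw [hb]
    linarith [hsum]
  · -- upper bound
    have hstep : ∀ k ∈ range (n + 1),
        Real.log (((k : ℝ) + 1) / ((n : ℝ) + 1)) * (n.choose k : ℝ) * x ^ k * (1 - x) ^ (n - k)
        ≤ (Real.log x - 1) * ((n.choose k : ℝ) * x ^ k * (1 - x) ^ (n - k))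
          + (1 / (((n : ℝ) + 1) * x)) *
            (((k : ℝ) + 1) * ((n.choose k : ℝ) * x ^ k * (1 - x) ^ (n - k))) := by
      intro k _
      have h3 := mul_le_mul_of_nonneg_right (hlog k).2 (hw k)
      calc Real.log (((k : ℝ) + 1) / ((n : ℝ) + 1)) * (n.choose k : ℝ) * x ^ k *
              (1 - x) ^ (n - k)
          = Real.log (((k : ℝ) + 1) / ((n : ℝ) + 1)) *
              ((n.choose k : ℝ) * x ^ k * (1 - x) ^ (n - k)) := by ring
        _ ≤ (Real.log x + ((k : ℝ) + 1) / (((n : ℝ) + 1) * x) - 1) *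
              ((n.choose k : ℝ) * x ^ k * (1 - x) ^ (n - k)) := h3
        _ = (Real.log x - 1) * ((n.choose k : ℝ) * x ^ k * (1 - x) ^ (n - k))
            + (1 / (((n : ℝ) + 1) * x)) *
              (((k : ℝ) + 1) * ((n.choose k : ℝ) * x ^ k * (1 - x) ^ (n - k))) := by
            field_simp
            ring
    have hsum := Finset.sum_le_sum hstep
    rw [Finset.sum_add_distrib, ← Finset.mul_sum, ← Finset.mul_sum, binom_sum_one] at hsum
    have hmean : ∑ k ∈ range (n + 1),
        ((k : ℝ) + 1) * ((n.choose k : ℝ) * x ^ k * (1 - x) ^ (n - k))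
        = (n : ℝ) * x + 1 := by
      have he : ∑ k ∈ range (n + 1),
          ((k : ℝ) + 1) * ((n.choose k : ℝ) * x ^ k * (1 - x) ^ (n - k))
          = ∑ k ∈ range (n + 1),
            ((k : ℝ) * (n.choose k : ℝ) * x ^ k * (1 - x) ^ (n - k)
              + (n.choose k : ℝ) * x ^ k * (1 - x) ^ (n - k)) :=
        Finset.sum_congr rfl fun k _ => by ring
      rw [he, Finset.sum_add_distrib, binom_mean, binom_sum_one]
    rw [hmean] at hsum
    have hfin : (Real.log x - 1) * 1 + 1 / (((n : ℝ) + 1) * x) * ((n : ℝ) * x + 1)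
        = Real.log x + (1 - x) / (((n : ℝ) + 1) * x) := by
      field_simp
      ring
    rw [hfin] at hsum
    exact hsum

private lemma binS_tendsto (x : ℝ) (hx0 : 0 < x) (hx1 : x ≤ 1) :
    Tendsto (fun n => binS n x) atTop (nhds (Real.log x)) := by
  have hy0 : (0 : ℝ) ≤ 1 - x := by linarith
  have hy1 : 1 - x < 1 := by linarith
  have hlow : Tendsto (fun n : ℕ => Real.log x + (1 - x) ^ (n + 1)) atTop
      (nhds (Real.log x)) := by
    have h1 : Tendsto (fun n : ℕ => (1 - x) ^ (n + 1)) atTop (nhds 0) := by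
      have := (tendsto_pow_atTop_nhds_zero_of_lt_one hy0 hy1).comp
        (Filter.tendsto_add_atTop_nat 1)
      simpa [Function.comp_def] using this
    simpa using h1.const_add (Real.log x)
  have hup : Tendsto (fun n : ℕ => Real.log x + (1 - x) / (((n : ℝ) + 1) * x)) atTop
      (nhds (Real.log x)) := by
    have h1 : Tendsto (fun n : ℕ => (1 - x) / (((n : ℝ) + 1) * x)) atTop (nhds 0) := by
      have h2 : (fun n : ℕ => (1 - x) / (((n : ℝ) + 1) * x))
          = fun n : ℕ => ((1 - x) / x) * (1 / ((n : ℝ) + 1)) := by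
        funext n
        rw [div_mul_div_comm, mul_one, mul_comm x]
      rw [h2]
      have := tendsto_one_div_add_atTop_nhds_zero_nat.const_mul ((1 - x) / x)
      simpa using this
    simpa using h1.const_add (Real.log x)
  refine tendsto_of_tendsto_of_tendsto_of_le_of_le hlow hup ?_ ?_
  · intro n; exact (binS_bounds n x hx0 hx1).1
  · intro n; exact (binS_bounds n x hx0 hx1).2

private lemma main_tendsto (x : ℝ) (hx0 : 0 < x) (hx1 : x ≤ 1) :
    Tendsto (fun N : ℕ => ∑ k ∈ Finset.range N,
        Real.log (((k : ℝ) + 1) / (N : ℝ)) * ((N - 1).choose k : ℝ) *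
          x ^ k * (1 - x) ^ (N - 1 - k)) atTop (nhds (Real.log x)) := by
  have hcomp := (binS_tendsto x hx0 hx1).comp (Filter.tendsto_sub_atTop_nat 1)
  refine hcomp.congr' ?_
  filter_upwards [Filter.eventually_ge_atTop 1] with N hN
  have hN1 : N - 1 + 1 = N := by omega
  show binS (N - 1) x = _
  unfold binS
  rw [hN1]
  refine Finset.sum_congr rfl fun k hk => ?_
  have hc : ((N - 1 : ℕ) : ℝ) + 1 = (N : ℝ) := by
    have h := congrArg (Nat.cast : ℕ → ℝ) hN1
    push_cast at h
    linarith
  rw [hc]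

theorem stmt_5
    (p q R α : ℝ)
    (hp : p ∈ Set.Ioc (0 : ℝ) 1) (hq : q ∈ Set.Ioc (0 : ℝ) 1)
    (hR : 0 < R) (hα : 0 < α) :
    Filter.Tendsto
      (fun N : ℕ =>
        α * ((∑ k ∈ Finset.range N,
                Real.log (((k : ℝ) + 1) / (N : ℝ)) * ((N - 1).choose k : ℝ) *
                  (p * q) ^ k * (1 - p * q) ^ (N - 1 - k))
           - (∑ k ∈ Finset.range N,
                Real.log (((k : ℝ) + 1) / (N : ℝ)) * ((N - 1).choose k : ℝ) *
                  p ^ k * (1 - p) ^ (N - 1 - k))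
           - Real.log R))
      Filter.atTop (nhds (α * Real.log (q / R))) := by
  obtain ⟨hp0, hp1⟩ := hp
  obtain ⟨hq0, hq1⟩ := hq
  have hpq0 : 0 < p * q := mul_pos hp0 hq0
  have hpq1 : p * q ≤ 1 := by nlinarith
  have h1 := main_tendsto (p * q) hpq0 hpq1
  have h2 := main_tendsto p hp0 hp1
  have h3 : Tendsto (fun N : ℕ =>
      (∑ k ∈ Finset.range N,
          Real.log (((k : ℝ) + 1) / (N : ℝ)) * ((N - 1).choose k : ℝ) *
            (p * q) ^ k * (1 - p * q) ^ (N - 1 - k))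
        - (∑ k ∈ Finset.range N,
          Real.log (((k : ℝ) + 1) / (N : ℝ)) * ((N - 1).choose k : ℝ) *
            p ^ k * (1 - p) ^ (N - 1 - k))
        - Real.log R) atTop
      (nhds (Real.log (p * q) - Real.log p - Real.log R)) :=
    (h1.sub h2).sub tendsto_const_nhds
  have hval : Real.log (p * q) - Real.log p - Real.log R = Real.log (q / R) := by
    rw [Real.log_mul hp0.ne' hq0.ne', Real.log_div hq0.ne' hR.ne']
    ring
  rw [hval] at h3
  exact h3.const_mul α
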